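/- For every integer n with n = 2 or n ≥ 4, there exists a connected graph G of order n such that χ_d^t(C(G)) = n. -/

import Mathlib

open SimpleGraph

/-- The central graph `C(G)`: subdivide each edge of `G` once (vertex `c_e` for each
edge `e`) and join all non-adjacent pairs of original vertices. -/
def centralGraph {V : Type*} (G : SimpleGraph V) : SimpleGraph (V ⊕ G.edgeSet) where
  Adj x y :=
    match x, y with
    | Sum.inl u, Sum.inl v => u ≠ v ∧ ¬ G.Adj u v
    | Sum.inl u, Sum.inr e => u ∈ (e : Sym2 V)
    | Sum.inr e, Sum.inl u => u ∈ (e : Sym2 V)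
    | Sum.inr _, Sum.inr _ => False
  symm := by
    constructor
    rintro (u | e) (v | f) h
    · exact ⟨h.1.symm, fun a => h.2 a.symm⟩
    · exact h
    · exact h
    · exact h
  loopless := by
    constructor
    rintro (u | e) h
    · exact h.1 rfl
    · exact h

/-- `f` is a total dominator coloring of `G`: a proper coloring such that every
vertex is adjacent to all vertices of some (nonempty) color class. -/
def IsTDColoring {V : Type*} (G : SimpleGraph V) (f : V → ℕ) : Prop :=
  (∀ u v, G.Adj u v → f u ≠ f v) ∧
  ∀ v, ∃ c, (∃ w, f w = c) ∧ ∀ w, f w = c → G.Adj v w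

/-- Total dominator chromatic number: minimum number of colors in a TDC. -/
noncomputable def tdcn {V : Type*} (G : SimpleGraph V) : ℕ :=
  sInf {k | ∃ f : V → ℕ, IsTDColoring G f ∧ ∀ v, f v < k}

/-- Total domination number. -/
noncomputable def tdn {V : Type*} (G : SimpleGraph V) : ℕ :=
  sInf {k | ∃ S : Set V, S.ncard = k ∧ ∀ v, ∃ u ∈ S, G.Adj v u}

/-- The join of two graphs. -/
def joinGraph {α β : Type*} (G : SimpleGraph α) (H : SimpleGraph β) :
    SimpleGraph (α ⊕ β) where
  Adj x y :=
    match x, y with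
    | Sum.inl u, Sum.inl v => G.Adj u v
    | Sum.inr u, Sum.inr v => H.Adj u v
    | Sum.inl _, Sum.inr _ => True
    | Sum.inr _, Sum.inl _ => True
  symm := ⟨by rintro (u | u) (v | v) h <;> first | exact h.symm | trivial⟩
  loopless := ⟨by rintro (u | u) h <;> exact h.ne rfl⟩

/-- The path graph on `n` vertices. -/
def pathG (n : ℕ) : SimpleGraph (Fin n) :=
  SimpleGraph.fromRel (fun i j => (i : ℕ) + 1 = (j : ℕ))

/-- The cycle graph on `n` vertices. -/
def cycleG (n : ℕ) : SimpleGraph (ZMod n) :=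
  SimpleGraph.fromRel (fun i j => i - j = 1)

/-- The double star `S_{1,n,n}`: center `0`, support vertices `1,...,n`
(adjacent to the center), each `i` with its own pendant `n+i`. -/
def doubleStar (n : ℕ) : SimpleGraph (Fin (2 * n + 1)) :=
  SimpleGraph.fromRel (fun a b =>
    ((a : ℕ) = 0 ∧ 1 ≤ (b : ℕ) ∧ (b : ℕ) ≤ n) ∨
    (1 ≤ (a : ℕ) ∧ (a : ℕ) ≤ n ∧ (b : ℕ) = (a : ℕ) + n))

/-- The disjoint union of a family of graphs. -/
def sigmaGraph {ι : Type*} {V : ι → Type*} (G : ∀ i, SimpleGraph (V i)) :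
    SimpleGraph (Σ i, V i) :=
  SimpleGraph.fromRel (fun x y =>
    ∃ (i : ι) (u v : V i), (G i).Adj u v ∧ x = ⟨i, u⟩ ∧ y = ⟨i, v⟩)
/-- The star graph with center `0`. -/
def starG (n : ℕ) : SimpleGraph (Fin n) where
  Adj i j := i ≠ j ∧ ((i : ℕ) = 0 ∨ (j : ℕ) = 0)
  symm := ⟨fun i j h => ⟨h.1.symm, h.2.symm⟩⟩
  loopless := ⟨fun i h => h.1 rfl⟩

lemma starG_adj {n : ℕ} {i j : Fin n} :
    (starG n).Adj i j ↔ i ≠ j ∧ ((i : ℕ) = 0 ∨ (j : ℕ) = 0) := Iff.rfl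

lemma central_adj_inl_inl {V : Type*} {G : SimpleGraph V} {u v : V} :
    (centralGraph G).Adj (Sum.inl u) (Sum.inl v) ↔ u ≠ v ∧ ¬ G.Adj u v := Iff.rfl

lemma central_adj_inl_inr {V : Type*} {G : SimpleGraph V} {u : V} {e : G.edgeSet} :
    (centralGraph G).Adj (Sum.inl u) (Sum.inr e) ↔ u ∈ (e : Sym2 V) := Iff.rfl

lemma central_adj_inr_inl {V : Type*} {G : SimpleGraph V} {u : V} {e : G.edgeSet} :
    (centralGraph G).Adj (Sum.inr e) (Sum.inl u) ↔ u ∈ (e : Sym2 V) := Iff.rfl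

lemma central_adj_inr_inr {V : Type*} {G : SimpleGraph V} {e e' : G.edgeSet} :
    (centralGraph G).Adj (Sum.inr e) (Sum.inr e') ↔ False := Iff.rfl

lemma starG_edge {n : ℕ} [NeZero n] (e : Sym2 (Fin n)) (he : e ∈ (starG n).edgeSet) :
    ∃ x : Fin n, (x : ℕ) ≠ 0 ∧ e = s((0 : Fin n), x) := by
  induction e with
  | _ a b =>
    rw [SimpleGraph.mem_edgeSet, starG_adj] at he
    obtain ⟨hab, h0⟩ := he
    rcases h0 with h | h
    · have ha : a = 0 := Fin.ext (by simpa using h)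
      subst ha
      refine ⟨b, fun hb => hab (Fin.ext (by simp [hb])), rfl⟩
    · have hb : b = 0 := Fin.ext (by simpa using h)
      subst hb
      refine ⟨a, fun ha => hab (Fin.ext (by simp [ha])), Sym2.eq_swap⟩

theorem exists_tdcn_central_eq_order_aux (n : ℕ) (hn : n = 2 ∨ 4 ≤ n) :
    ∃ G : SimpleGraph (Fin n), G.Connected ∧ tdcn (centralGraph G) = n := by
  have hn2 : 2 ≤ n := by omega
  haveI : NeZero n := ⟨by omega⟩
  have h0v : ((0 : Fin n) : ℕ) = 0 := Fin.val_zero n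
  refine ⟨starG n, ?_, ?_⟩
  · -- connectedness
    rw [SimpleGraph.connected_iff]
    refine ⟨?_, ⟨0⟩⟩
    have key : ∀ u : Fin n, (starG n).Reachable u 0 := by
      intro u
      by_cases h : u = 0
      · rw [h]
      · exact SimpleGraph.Adj.reachable (starG_adj.mpr ⟨h, Or.inr h0v⟩)
    exact fun u v => (key u).trans (key v).symm
  · -- tdcn = n
    have hmem : n ∈ {k | ∃ f : (Fin n ⊕ (starG n).edgeSet) → ℕ,
        IsTDColoring (centralGraph (starG n)) f ∧ ∀ v, f v < k} := by
      refine ⟨Sum.elim (fun i => (i : ℕ) - 1) (fun _ => n - 1), ⟨?_, ?_⟩, ?_⟩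
      · -- proper
        rintro (i | e) (j | e') hadj
        · rw [central_adj_inl_inl] at hadj
          obtain ⟨hij, hns⟩ := hadj
          have h1 : (i : ℕ) ≠ (j : ℕ) := fun h => hij (Fin.ext h)
          have h2 : (i : ℕ) ≠ 0 := fun h => hns (starG_adj.mpr ⟨hij, Or.inl h⟩)
          have h3 : (j : ℕ) ≠ 0 := fun h => hns (starG_adj.mpr ⟨hij, Or.inr h⟩)
          simp only [Sum.elim_inl]
          omega
        · have := i.isLt
          simp only [Sum.elim_inl, Sum.elim_inr]
          omega
        · have := j.isLt
          simp only [Sum.elim_inl, Sum.elim_inr]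
          omega
        · exact (central_adj_inr_inr.mp hadj).elim
      · -- total domination
        rintro (i | e)
        · by_cases hi0 : (i : ℕ) = 0
          · have hi : i = 0 := Fin.ext (by rw [hi0, h0v])
            subst hi
            refine ⟨n - 1, ⟨Sum.inr ⟨s((0 : Fin n), ⟨1, by omega⟩), ?_⟩, rfl⟩, ?_⟩
            · rw [SimpleGraph.mem_edgeSet, starG_adj]
              exact ⟨fun h => by simpa using congrArg Fin.val h, Or.inl h0v⟩
            · rintro (m | e') hw
              · exfalso
                have := m.isLt
                simp only [Sum.elim_inl] at hw
                omega
              · rw [central_adj_inl_inr]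
                obtain ⟨x, hx0, he⟩ := starG_edge _ e'.2
                rw [he]
                exact Sym2.mem_mk_left _ _
          · rcases hn with h2 | h4
            · -- n = 2
              refine ⟨n - 1, ⟨Sum.inr ⟨s((0 : Fin n), ⟨1, by omega⟩), ?_⟩, rfl⟩, ?_⟩
              · rw [SimpleGraph.mem_edgeSet, starG_adj]
                exact ⟨fun h => by simpa using congrArg Fin.val h, Or.inl h0v⟩
              · rintro (m | e') hw
                · exfalso
                  have := m.isLt
                  simp only [Sum.elim_inl] at hw
                  omega
                · rw [central_adj_inl_inr]
                  obtain ⟨x, hx0, he⟩ := starG_edge _ e'.2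
                  have hix : i = x := by
                    apply Fin.ext
                    have := x.isLt
                    have := i.isLt
                    omega
                  rw [he, hix]
                  exact Sym2.mem_mk_right _ _
            · -- 4 ≤ n
              by_cases hi2 : (i : ℕ) = 2
              · refine ⟨2, ⟨Sum.inl ⟨3, by omega⟩, by simp⟩, ?_⟩
                rintro (m | e') hw
                · simp only [Sum.elim_inl] at hw
                  have hm3 : (m : ℕ) = 3 := by have := m.isLt; omega
                  rw [central_adj_inl_inl]
                  refine ⟨fun h => by rw [h] at hi2; rw [hm3] at hi2; omega, ?_⟩
                  rw [starG_adj]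
                  rintro ⟨-, h | h⟩
                  · omega
                  · rw [hm3] at h; omega
                · exfalso
                  simp only [Sum.elim_inr] at hw
                  omega
              · refine ⟨1, ⟨Sum.inl ⟨2, by omega⟩, by simp⟩, ?_⟩
                rintro (m | e') hw
                · simp only [Sum.elim_inl] at hw
                  have hm2 : (m : ℕ) = 2 := by have := m.isLt; omega
                  rw [central_adj_inl_inl]
                  refine ⟨fun h => by rw [h] at hi2; rw [hm2] at hi2; omega, ?_⟩
                  rw [starG_adj]
                  rintro ⟨-, h | h⟩
                  · omega
                  · rw [hm2] at h; omega
                · exfalso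
                  simp only [Sum.elim_inr] at hw
                  omega
        · -- subdivision vertex
          obtain ⟨x, hx0, he⟩ := starG_edge _ e.2
          by_cases hx1 : (x : ℕ) = 1
          · refine ⟨0, ⟨Sum.inl 0, by simp [h0v]⟩, ?_⟩
            rintro (m | e') hw
            · simp only [Sum.elim_inl] at hw
              have hm : (m : ℕ) = 0 ∨ (m : ℕ) = 1 := by omega
              rw [central_adj_inr_inl, he]
              rcases hm with h | h
              · have : m = 0 := Fin.ext (by rw [h, h0v])
                rw [this]; exact Sym2.mem_mk_left _ _
              · have : m = x := Fin.ext (by rw [h, hx1])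
                rw [this]; exact Sym2.mem_mk_right _ _
            · exfalso
              simp only [Sum.elim_inr] at hw
              omega
          · refine ⟨(x : ℕ) - 1, ⟨Sum.inl x, rfl⟩, ?_⟩
            rintro (m | e') hw
            · simp only [Sum.elim_inl] at hw
              have hm : m = x := by
                apply Fin.ext
                have := m.isLt
                have := x.isLt
                omega
              rw [central_adj_inr_inl, he, hm]
              exact Sym2.mem_mk_right _ _
            · exfalso
              simp only [Sum.elim_inr] at hw
              have := x.isLt
              omega
      · -- bounds
        rintro (i | e)
        · have := i.isLt
          simp only [Sum.elim_inl]
          omega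
        · simp only [Sum.elim_inr]
          omega
    have hlb : ∀ k ∈ {k | ∃ f : (Fin n ⊕ (starG n).edgeSet) → ℕ,
        IsTDColoring (centralGraph (starG n)) f ∧ ∀ v, f v < k}, n ≤ k := by
      intro k hk
      obtain ⟨f, ⟨hprop, hdom⟩, hlt⟩ := hk
      obtain ⟨c, ⟨w0, hw0⟩, hc⟩ := hdom (Sum.inl 0)
      have hck : c < k := hw0 ▸ hlt w0
      have key : ∀ i : Fin n, i ≠ 0 → f (Sum.inl i) ≠ c := by
        intro i hi hfc
        have hadj := central_adj_inl_inl.mp (hc _ hfc)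
        exact hadj.2 (starG_adj.mpr ⟨hadj.1, Or.inl h0v⟩)
      classical
      let g : Fin n → Fin k := fun i =>
        if h : i = 0 then ⟨c, hck⟩ else ⟨f (Sum.inl i), hlt _⟩
      have hg : Function.Injective g := by
        intro a b hab
        by_cases ha : a = 0 <;> by_cases hb : b = 0
        · rw [ha, hb]
        · exfalso
          simp only [g, ha, hb, dif_pos, dif_neg, not_false_iff] at hab
          have h := congrArg Fin.val hab
          simp only [] at h
          exact key b hb h.symm
        · exfalso
          simp only [g, ha, hb, dif_pos, dif_neg, not_false_iff] at hab
          have h := congrArg Fin.val hab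
          simp only [] at h
          exact key a ha h
        · by_contra hne
          simp only [g, ha, hb, dif_neg, not_false_iff] at hab
          have hfab : f (Sum.inl a) = f (Sum.inl b) := congrArg Fin.val hab
          have hadj : (centralGraph (starG n)).Adj (Sum.inl a) (Sum.inl b) :=
            central_adj_inl_inl.mpr ⟨hne, fun hG =>
              (starG_adj.mp hG).2.elim (fun h => ha (Fin.ext (by rw [h, h0v])))
                (fun h => hb (Fin.ext (by rw [h, h0v])))⟩
          exact hprop _ _ hadj hfab
      have := Fintype.card_le_of_injective g hg
      simpa using this
    show sInf _ = n
    exact le_antisymm (Nat.sInf_le hmem) (le_csInf ⟨n, hmem⟩ hlb)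

theorem exists_tdcn_central_eq_order (n : ℕ) (hn : n = 2 ∨ 4 ≤ n) :
    ∃ G : SimpleGraph (Fin n), G.Connected ∧ tdcn (centralGraph G) = n := by
  exact exists_tdcn_central_eq_order_aux n hn
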